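/- Let ρ be a constant skew-symmetric n×n real matrix and P₁ a constant symmetric n×n real matrix. Let G be the bilinear-form field on ℝ×ℝ×ℝⁿ given classically by 2 du dv + xᵀe^{uρ}P₁e^{−uρ}x du² − dxᵀdx, and let G' be the Alekseevsky-form field 2 du dv + Xᵀ(P₁+ρ²)X du² + 2XᵀρdX du − dXᵀdX, i.e. G'(u,v,X)((a₁,b₁,ξ₁),(a₂,b₂,ξ₂)) = a₁b₂ + a₂b₁ + (Xᵀ(P₁+ρ²)X)a₁a₂ + a₁Xᵀρξ₂ + a₂Xᵀρξ₁ − ξ₁ᵀξ₂. Then the diffeomorphism Φ(u,v,X) = (u, v, e^{uρ}X) of ℝ×ℝ×ℝⁿ satisfies Φ*G = G'; in particular Φ is an isometry from (ℝ×ℝ×ℝⁿ, G') to (ℝ×ℝ×ℝⁿ, G) which commutes with the dilation 𝒟(u,v,x) = (0,2v,x) and fixes the curve {(u,0,0)} pointwise. -/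

import Mathlib

open Matrix

attribute [local instance] Matrix.normedAddCommGroup Matrix.normedSpace

noncomputable section

/-- The manifold `ℝ × ℝ × ℝⁿ`, with points `(u, v, x)`. -/
abbrev Mfd (n : ℕ) := ℝ × ℝ × (Fin n → ℝ)

namespace Stmt0Aux

variable (n : ℕ)

def matCLM : Matrix (Fin n) (Fin n) ℝ →ₐ[ℝ] ((Fin n → ℝ) →L[ℝ] (Fin n → ℝ)) where
  toFun M := (Matrix.mulVecLin M).toContinuousLinearMap
  map_one' := by ext x; simp
  map_mul' A B := by ext x; simp
  map_zero' := by ext x; simp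
  map_add' A B := by ext x; simp
  commutes' r := by ext x i; simp [Matrix.mulVecLin, Matrix.mulVec, dotProduct,
    Matrix.algebraMap_matrix_apply, Finset.sum_ite_eq, ContinuousLinearMap.algebraMap_apply]

theorem matCLM_apply (M : Matrix (Fin n) (Fin n) ℝ) (x : Fin n → ℝ) :
    matCLM n M x = M *ᵥ x := rfl

theorem matCLM_exp (M : Matrix (Fin n) (Fin n) ℝ) :
    matCLM n (NormedSpace.exp M) = NormedSpace.exp (matCLM n M) := by
  letI : SeminormedRing (Matrix (Fin n) (Fin n) ℝ) := Matrix.linftyOpSemiNormedRing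
  letI : NormedRing (Matrix (Fin n) (Fin n) ℝ) := Matrix.linftyOpNormedRing
  letI : NormedAlgebra ℝ (Matrix (Fin n) (Fin n) ℝ) := Matrix.linftyOpNormedAlgebra
  letI : NormedAlgebra ℚ (Matrix (Fin n) (Fin n) ℝ) := Matrix.linftyOpNormedAlgebra
  exact @NormedSpace.map_exp _ _ _ _ (FiniteDimensional.complete ℝ (Matrix (Fin n) (Fin n) ℝ)) _ _ _ _ _ (matCLM n) ((matCLM n).toLinearMap.continuous_of_finiteDimensional) M

theorem hasFDerivAt_Phi (ρ : Matrix (Fin n) (Fin n) ℝ) (m : Mfd n) :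
    ∃ L : Mfd n →L[ℝ] Mfd n,
      HasFDerivAt (fun m : Mfd n =>
        ((m.1, m.2.1, NormedSpace.exp (m.1 • ρ) *ᵥ m.2.2) : Mfd n)) L m ∧
      ∀ Y : Mfd n, L Y = (Y.1, Y.2.1,
        Y.1 • (NormedSpace.exp (m.1 • ρ) *ᵥ (ρ *ᵥ m.2.2))
          + NormedSpace.exp (m.1 • ρ) *ᵥ Y.2.2) := by
  set T := matCLM n ρ with hT
  have hpt : ∀ (a : ℝ) (x : Fin n → ℝ),
      NormedSpace.exp (a • T) x = NormedSpace.exp (a • ρ) *ᵥ x := by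
    intro a x
    rw [← matCLM_apply, ← _root_.map_smul, matCLM_exp]
  have hc : HasFDerivAt (fun m : Mfd n => NormedSpace.exp (m.1 • T))
      (((1 : ℝ →L[ℝ] ℝ).smulRight (NormedSpace.exp (m.1 • T) * T)).comp
        (ContinuousLinearMap.fst ℝ ℝ (ℝ × (Fin n → ℝ)))) m :=
    (hasDerivAt_exp_smul_const T m.1).hasFDerivAt.comp m (hasFDerivAt_fst)
  have hu : HasFDerivAt (fun m : Mfd n => m.2.2)
      ((ContinuousLinearMap.snd ℝ ℝ (Fin n → ℝ)).comp
        (ContinuousLinearMap.snd ℝ ℝ (ℝ × (Fin n → ℝ)))) m :=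
    hasFDerivAt_snd.snd
  have h3 := hc.clm_apply hu
  have h2 : HasFDerivAt (fun m : Mfd n => m.2.1)
      ((ContinuousLinearMap.fst ℝ ℝ (Fin n → ℝ)).comp
        (ContinuousLinearMap.snd ℝ ℝ (ℝ × (Fin n → ℝ)))) m := hasFDerivAt_snd.fst
  have h := (hasFDerivAt_fst (𝕜 := ℝ) (p := m) (E := ℝ) (F := ℝ × (Fin n → ℝ))).prodMk
    (h2.prodMk h3)
  simp only [hpt] at h
  refine ⟨_, h, fun Y => ?_⟩
  simp [hpt]
  rw [matCLM_apply, Matrix.mulVec_mulVec, add_comm]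

variable {n}

theorem exp_neg_mul (ρ : Matrix (Fin n) (Fin n) ℝ) (u : ℝ) :
    NormedSpace.exp (-(u • ρ)) * NormedSpace.exp (u • ρ) = 1 := by
  have h := Matrix.exp_add_of_commute (-(u • ρ)) (u • ρ)
    (Commute.neg_left (Commute.refl _))
  rw [neg_add_cancel, NormedSpace.exp_zero] at h
  exact h.symm

theorem exp_mul_neg (ρ : Matrix (Fin n) (Fin n) ℝ) (u : ℝ) :
    NormedSpace.exp (u • ρ) * NormedSpace.exp (-(u • ρ)) = 1 := by
  have h := Matrix.exp_add_of_commute (u • ρ) (-(u • ρ))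
    (Commute.neg_right (Commute.refl _))
  rw [add_neg_cancel, NormedSpace.exp_zero] at h
  exact h.symm

theorem exp_transp (ρ : Matrix (Fin n) (Fin n) ℝ) (hρ : ρᵀ = -ρ) (u : ℝ) :
    (NormedSpace.exp (u • ρ))ᵀ = NormedSpace.exp (-(u • ρ)) := by
  have h := Matrix.exp_transpose (u • ρ)
  rw [transpose_smul, hρ, smul_neg] at h
  exact h.symm

theorem dotL (A : Matrix (Fin n) (Fin n) ℝ) (v w : Fin n → ℝ) :
    (A *ᵥ v) ⬝ᵥ w = v ⬝ᵥ (Aᵀ *ᵥ w) := by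
  rw [Matrix.dotProduct_mulVec, Matrix.vecMul_transpose]

theorem expdot (ρ : Matrix (Fin n) (Fin n) ℝ) (hρ : ρᵀ = -ρ) (u : ℝ) (v w : Fin n → ℝ) :
    (NormedSpace.exp (u • ρ) *ᵥ v) ⬝ᵥ (NormedSpace.exp (u • ρ) *ᵥ w) = v ⬝ᵥ w := by
  rw [dotL, exp_transp ρ hρ, Matrix.mulVec_mulVec, exp_neg_mul, Matrix.one_mulVec]

end Stmt0Aux

open Stmt0Aux

/-- The Brinkmann metric `2 du dv + xᵀ p(u) x du² − dxᵀ dx`, as a field of bilinear forms. -/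
def Gb (n : ℕ) (p : ℝ → Matrix (Fin n) (Fin n) ℝ) :
    Mfd n → Mfd n → Mfd n → ℝ := fun m X₁ X₂ =>
  X₁.1 * X₂.2.1 + X₂.1 * X₁.2.1 + (m.2.2 ⬝ᵥ (p m.1 *ᵥ m.2.2)) * X₁.1 * X₂.1
    - X₁.2.2 ⬝ᵥ X₂.2.2

/-- Pullback of a field of bilinear forms under a smooth map. -/
def pull (n : ℕ) (φ : Mfd n → Mfd n) (G : Mfd n → Mfd n → Mfd n → ℝ) :
    Mfd n → Mfd n → Mfd n → ℝ := fun m X Y =>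
  G (φ m) (fderiv ℝ φ m X) (fderiv ℝ φ m Y)

/-- The dilation vector field `𝒟(u,v,x) = (0, 2v, x)`. -/
def dil (n : ℕ) : Mfd n → Mfd n := fun m => (0, 2 * m.2.1, m.2.2)

/-- the change of variables `Φ(u,v,X) = (u, v, e^{uρ}X)` pulls back the
Brinkmann metric with tidal matrix `e^{uρ} P₁ e^{−uρ}` to the Alekseevsky-form metric
`2 du dv + Xᵀ(P₁+ρ²)X du² + 2XᵀρdX du − dXᵀdX`; it is a bijection commuting with the
dilation and fixing the curve `{(u,0,0)}` pointwise. -/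
theorem stmt0 (n : ℕ) (hn : 1 ≤ n)
    (ρ P₁ : Matrix (Fin n) (Fin n) ℝ) (hρ : ρᵀ = -ρ) (hP₁ : P₁ᵀ = P₁)
    (G : Mfd n → Mfd n → Mfd n → ℝ)
    (hG : G = Gb n (fun u =>
      NormedSpace.exp (u • ρ) * P₁ * NormedSpace.exp (-(u • ρ))))
    (G' : Mfd n → Mfd n → Mfd n → ℝ)
    (hG' : G' = fun m X₁ X₂ =>
      X₁.1 * X₂.2.1 + X₂.1 * X₁.2.1
        + (m.2.2 ⬝ᵥ ((P₁ + ρ * ρ) *ᵥ m.2.2)) * X₁.1 * X₂.1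
        + X₁.1 * (m.2.2 ⬝ᵥ (ρ *ᵥ X₂.2.2)) + X₂.1 * (m.2.2 ⬝ᵥ (ρ *ᵥ X₁.2.2))
        - X₁.2.2 ⬝ᵥ X₂.2.2)
    (Φ : Mfd n → Mfd n)
    (hΦ : Φ = fun m => (m.1, m.2.1, NormedSpace.exp (m.1 • ρ) *ᵥ m.2.2)) :
    (∀ m X Y, pull n Φ G m X Y = G' m X Y) ∧
    Function.Bijective Φ ∧
    (∀ m : Mfd n, fderiv ℝ Φ m (dil n m) = dil n (Φ m)) ∧
    (∀ u : ℝ, Φ (u, 0, 0) = (u, 0, 0)) := by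
  subst hG hG' hΦ
  refine ⟨?_, ?_, ?_, ?_⟩
  · intro m X Y
    obtain ⟨L, hL, hA⟩ := hasFDerivAt_Phi n ρ m
    have hmid : (NormedSpace.exp (m.1 • ρ) * P₁ * NormedSpace.exp (-(m.1 • ρ))) *ᵥ
        (NormedSpace.exp (m.1 • ρ) *ᵥ m.2.2)
        = NormedSpace.exp (m.1 • ρ) *ᵥ (P₁ *ᵥ m.2.2) := by
      rw [Matrix.mulVec_mulVec, mul_assoc (NormedSpace.exp (m.1 • ρ) * P₁),
        exp_neg_mul, mul_one, ← Matrix.mulVec_mulVec]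
    have hρdot : ∀ w : Fin n → ℝ, (ρ *ᵥ m.2.2) ⬝ᵥ w = -(m.2.2 ⬝ᵥ (ρ *ᵥ w)) := by
      intro w
      rw [dotL, hρ, Matrix.neg_mulVec, dotProduct_neg]
    have hρdot' : ∀ w : Fin n → ℝ, w ⬝ᵥ (ρ *ᵥ m.2.2) = -(m.2.2 ⬝ᵥ (ρ *ᵥ w)) := by
      intro w
      rw [dotProduct_comm, hρdot]
    simp only [pull, Gb, hL.fderiv, hA]
    rw [hmid]
    simp only [dotProduct_add, add_dotProduct, smul_dotProduct,
      dotProduct_smul, smul_eq_mul, expdot ρ hρ, Matrix.add_mulVec,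
      dotProduct_add, ← Matrix.mulVec_mulVec]
    rw [hρdot (ρ *ᵥ m.2.2), hρdot' X.2.2, hρdot Y.2.2]
    ring
  · rw [Function.bijective_iff_has_inverse]
    refine ⟨fun m => (m.1, m.2.1, NormedSpace.exp (-(m.1 • ρ)) *ᵥ m.2.2), fun m => ?_,
      fun m => ?_⟩ <;>
    · refine Prod.ext rfl (Prod.ext rfl ?_)
      simp only
      rw [Matrix.mulVec_mulVec]
      first
      | rw [exp_neg_mul, Matrix.one_mulVec]
      | rw [exp_mul_neg, Matrix.one_mulVec]
  · intro m
    obtain ⟨L, hL, hA⟩ := hasFDerivAt_Phi n ρ m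
    rw [hL.fderiv, hA]
    simp [dil]
  · intro u
    simp [Matrix.mulVec_zero]
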